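/- For any prime p with p ≡ 1 (mod 6) and integers x, y, the quantity (x+y)^p - x^p - y^p is divisible by p·x·y·(x+y)·(x^2+xy+y^2)^2. -/

import Mathlib

open Polynomial

lemma nilp_one_add_pow {R : Type*} [CommRing R] (c : R) (hc : c * c = 0) (n : ℕ) :
    (1 + c) ^ n = 1 + (n : R) * c := by
  induction n with
  | zero => simp
  | succ n ih =>
    rw [pow_succ, ih]
    push_cast
    linear_combination (n : R) * hc

lemma nilp_binom {R : Type*} [CommRing R] (a b : R) (hb : b * b = 0) (n : ℕ) :
    (a + b) ^ (n + 1) = a ^ (n + 1) + ((n : R) + 1) * a ^ n * b := by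
  induction n with
  | zero => push_cast; ring
  | succ n ih =>
    rw [pow_succ, ih]
    push_cast
    linear_combination ((n : R) + 1) * a ^ n * hb

lemma sq_dvd_aux (m : ℕ) :
    ((X : ℤ[X]) ^ 2 + X + 1) ^ 2 ∣ (X + 1) ^ (6 * m + 1) - X ^ (6 * m + 1) - 1 := by
  rw [← Ideal.mem_span_singleton, ← Ideal.Quotient.eq_zero_iff_mem]
  set I := Ideal.span {((X : ℤ[X]) ^ 2 + X + 1) ^ 2}
  set t : ℤ[X] ⧸ I := Ideal.Quotient.mk I X with ht
  have hu : (t ^ 2 + t + 1) * (t ^ 2 + t + 1) = 0 := by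
    have : (Ideal.Quotient.mk I) (((X : ℤ[X]) ^ 2 + X + 1) ^ 2) = 0 :=
      Ideal.Quotient.eq_zero_iff_mem.mpr (Ideal.subset_span rfl)
    simpa [ht, pow_two] using this
  have hc : ((t - 1) * (t ^ 2 + t + 1)) * ((t - 1) * (t ^ 2 + t + 1)) = 0 := by
    linear_combination (t - 1) ^ 2 * hu
  have h3 : t ^ 3 = 1 + (t - 1) * (t ^ 2 + t + 1) := by ring
  have h6m : t ^ (6 * m) = 1 + (2 * m : ℕ) * ((t - 1) * (t ^ 2 + t + 1)) := by
    rw [show 6 * m = 3 * (2 * m) by ring, pow_mul, h3, nilp_one_add_pow _ hc]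
  have h12m : t ^ (12 * m) = 1 + (4 * m : ℕ) * ((t - 1) * (t ^ 2 + t + 1)) := by
    rw [show 12 * m = 3 * (4 * m) by ring, pow_mul, h3, nilp_one_add_pow _ hc]
  have hodd : Odd (6 * m + 1) := ⟨3 * m, by ring⟩
  have heven : Even (6 * m) := ⟨3 * m, by ring⟩
  have goal : (t + 1) ^ (6 * m + 1) - t ^ (6 * m + 1) - 1 = 0 := by
    have e1 : t + 1 = -t ^ 2 + (t ^ 2 + t + 1) := by ring
    have e2 : (-t ^ 2) ^ (6 * m + 1) = -(t ^ (12 * m) * t ^ 2) := by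
      rw [hodd.neg_pow (t ^ 2), ← pow_mul, show 2 * (6 * m + 1) = 12 * m + 2 by ring, pow_add]
    have e3 : (-t ^ 2) ^ (6 * m) = t ^ (12 * m) := by
      rw [heven.neg_pow (t ^ 2), ← pow_mul, show 2 * (6 * m) = 12 * m by ring]
    have e4 : t ^ (6 * m + 1) = (1 + (2 * m : ℕ) * ((t - 1) * (t ^ 2 + t + 1))) * t := by
      rw [pow_succ, h6m]
    rw [e1, nilp_binom _ _ hu (6 * m), e2, e3, h12m, e4]
    push_cast
    linear_combination (2 * (m : ℤ[X] ⧸ I) - 24 * (m : ℤ[X] ⧸ I) ^ 2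
      + 24 * (m : ℤ[X] ⧸ I) ^ 2 * t) * hu
  simpa [ht] using goal

lemma factor_lemma (p : ℕ) (hp : p.Prime) (hp1 : p % 6 = 1) :
    ∃ h : ℤ[X], ((X + 1) ^ p - X ^ p - 1 : ℤ[X]) =
      C (p : ℤ) * (X * (X + 1) * (X ^ 2 + X + 1) ^ 2) * h ∧ h.natDegree ≤ p - 7 := by
  have hp2 := hp.two_le
  have hp7 : 7 ≤ p := by omega
  obtain ⟨m, hm⟩ : ∃ m, p = 6 * m + 1 := ⟨p / 6, by omega⟩
  set f : ℤ[X] := (X + 1) ^ p - X ^ p - 1 with hf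
  have hX : X ∣ f := by
    rw [X_dvd_iff]
    simp [hf, coeff_X_add_one_pow, coeff_X_pow, coeff_one, show (0:ℕ) ≠ p by omega]
  have hX1 : (X + 1 : ℤ[X]) ∣ f := by
    have : (X - C (-1) : ℤ[X]) ∣ f := by
      rw [dvd_iff_isRoot]
      have hodd : Odd p := ⟨3 * m, by omega⟩
      simp [hf, IsRoot, hodd.neg_one_pow, zero_pow (show p ≠ 0 by omega)]
    simpa using this
  have hg : ((X : ℤ[X]) ^ 2 + X + 1) ^ 2 ∣ f := by rw [hf, hm]; exact sq_dvd_aux m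
  have c1 : IsCoprime (X : ℤ[X]) (X + 1) := ⟨-1, 1, by ring⟩
  have c2 : IsCoprime (X : ℤ[X]) (X ^ 2 + X + 1) := ⟨-(X + 1), 1, by ring⟩
  have c3 : IsCoprime ((X : ℤ[X]) + 1) (X ^ 2 + X + 1) := ⟨-X, 1, by ring⟩
  have hM : (X * (X + 1)) * ((X ^ 2 + X + 1) ^ 2) ∣ f :=
    ((c2.mul_left c3).pow_right).mul_dvd (c1.mul_dvd hX hX1) hg
  have hCp : C (p : ℤ) ∣ f := by
    rw [C_dvd_iff_dvd_coeff]
    intro i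
    simp only [hf, coeff_sub, coeff_X_add_one_pow, coeff_X_pow, coeff_one]
    by_cases h0 : i = 0
    · simp [h0, show (0:ℕ) ≠ p by omega]
    · by_cases hip : i = p
      · simp [hip, show p ≠ 0 by omega]
      · by_cases hlt : i < p
        · have := hp.dvd_choose_self h0 hlt
          simp [hip, h0]
          exact_mod_cast this
        · have : p < i := by omega
          simp [hip, h0, Nat.choose_eq_zero_of_lt this]
  obtain ⟨h1, hh1⟩ := hM
  have hPrime : Prime (C (p : ℤ)) := prime_C_iff.mpr (Nat.prime_iff_prime_int.mp hp)
  have hMdeg : ((X : ℤ[X]) * (X + 1) * (X ^ 2 + X + 1) ^ 2).natDegree = 6 := by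
    compute_degree!
  have hMmonic : ((X : ℤ[X]) * (X + 1) * (X ^ 2 + X + 1) ^ 2).Monic := by
    have m1 : ((X : ℤ[X]) + 1).Monic := by simpa using monic_X_add_C (1 : ℤ)
    have m2 : ((X : ℤ[X]) ^ 2 + X + 1).Monic := by
      have : ((X : ℤ[X]) ^ 2 + (X + 1)).Monic := by
        apply monic_X_pow_add
        have h1 : ((X : ℤ[X]) + 1).degree = 1 := by
          simpa using degree_X_add_C (1 : ℤ)
        rw [h1]
        norm_num
      simpa [add_assoc] using this
    exact (monic_X.mul m1).mul (m2.pow 2)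
  have hnotdvd : ¬ (C (p : ℤ) ∣ (X : ℤ[X]) * (X + 1) * (X ^ 2 + X + 1) ^ 2) := by
    intro hd
    have h6 := (C_dvd_iff_dvd_coeff _ _).mp hd 6
    rw [show (6:ℕ) = ((X : ℤ[X]) * (X + 1) * (X ^ 2 + X + 1) ^ 2).natDegree from hMdeg.symm,
      hMmonic.coeff_natDegree] at h6
    have := Int.le_of_dvd one_pos h6
    omega
  have hd2 : C (p : ℤ) ∣ h1 := by
    have hstep : C (p : ℤ) ∣ X * (X + 1) * (X ^ 2 + X + 1) ^ 2 * h1 := hh1 ▸ hCp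
    rcases hPrime.dvd_or_dvd hstep with h | h
    · exact absurd h hnotdvd
    · exact h
  obtain ⟨h2, hh2⟩ := hd2
  have hfeq : f = C (p : ℤ) * (X * (X + 1) * (X ^ 2 + X + 1) ^ 2) * h2 := by
    rw [hh1, hh2]; ring
  refine ⟨h2, hfeq, ?_⟩
  -- degree bound
  have hfne : f ≠ 0 := by
    intro h
    have hc1 : f.coeff 1 = (p : ℤ) := by
      simp [hf, coeff_X_add_one_pow, coeff_X_pow, coeff_one, show (1:ℕ) ≠ p by omega,
        Nat.choose_one_right]
    rw [h] at hc1
    simp at hc1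
    omega
  have hfdeg : f.natDegree ≤ p - 1 := by
    rw [natDegree_le_iff_coeff_eq_zero]
    intro N hN
    have hNp : p ≤ N := by omega
    simp only [hf, coeff_sub, coeff_X_add_one_pow, coeff_X_pow, coeff_one]
    by_cases h : N = p
    · simp [h, show N ≠ 0 by omega, show p ≠ 0 by omega]
    · have : p < N := by omega
      simp [h, show N ≠ 0 by omega, Nat.choose_eq_zero_of_lt this]
  have hDne : (C (p : ℤ) * (X * (X + 1) * (X ^ 2 + X + 1) ^ 2)) ≠ 0 := by
    intro h
    rw [h, zero_mul] at hfeq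
    exact hfne hfeq
  have hh2ne : h2 ≠ 0 := by
    intro h
    rw [h, mul_zero] at hfeq
    exact hfne hfeq
  have hDdeg : (C (p : ℤ) * (X * (X + 1) * (X ^ 2 + X + 1) ^ 2)).natDegree = 6 := by
    rw [natDegree_C_mul (by exact_mod_cast hp.ne_zero : (p:ℤ) ≠ 0), hMdeg]
  have := natDegree_mul hDne hh2ne
  rw [← hfeq, hDdeg] at this
  omega


theorem stmt_3 (p : ℕ) (hp : p.Prime) (hp1 : p % 6 = 1) (x y : ℤ) :
    (p : ℤ) * x * y * (x + y) * (x ^ 2 + x * y + y ^ 2) ^ 2 ∣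
      (x + y) ^ p - x ^ p - y ^ p := by
  have hp2 := hp.two_le
  have hp7 : 7 ≤ p := by omega
  obtain ⟨h2, hfeq, hdeg⟩ := factor_lemma p hp hp1
  set W : ℤ := ∑ i ∈ Finset.range (p - 6), h2.coeff i * x ^ i * y ^ (p - 7 - i) with hW
  refine ⟨W, ?_⟩
  by_cases hy : y = 0
  · subst hy
    simp [zero_pow (show p ≠ 0 by omega)]
  · have hyQ : (y : ℚ) ≠ 0 := Int.cast_ne_zero.mpr hy
    set q : ℚ := (x : ℚ) / (y : ℚ) with hq
    have key := congrArg (Polynomial.aeval q) hfeq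
    simp only [map_sub, map_pow, map_add, map_mul, Polynomial.aeval_X, Polynomial.aeval_C,
      map_one, map_intCast, map_natCast, algebraMap_int_eq, eq_intCast, Int.cast_natCast] at key
    set S : ℚ := Polynomial.aeval q h2 with hS
    have hSsum : S = ∑ i ∈ Finset.range (p - 6), (h2.coeff i : ℚ) * q ^ i := by
      have hlt : h2.natDegree < p - 6 := by omega
      rw [hS, Polynomial.aeval_eq_sum_range' hlt q]
      simp [zsmul_eq_mul]
    have hx : (x : ℚ) = y * q := by
      rw [hq, mul_div_assoc']; exact (mul_div_cancel_left₀ (x : ℚ) hyQ).symm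
    have hWQ : (W : ℚ) = (y : ℚ) ^ (p - 7) * S := by
      rw [hSsum, hW]
      push_cast
      rw [Finset.mul_sum]
      apply Finset.sum_congr rfl
      intro i hi
      have hi' : i ≤ p - 7 := by
        have := Finset.mem_range.mp hi
        omega
      conv_rhs => rw [show (p - 7 : ℕ) = (p - 7 - i) + i by omega]
      rw [pow_add, hx, mul_pow]
      ring
    have hxy : ((x : ℚ) + y) = y * (q + 1) := by rw [hx]; ring
    have hg2 : ((x : ℚ) ^ 2 + x * y + y ^ 2) = y ^ 2 * (q ^ 2 + q + 1) := by rw [hx]; ring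
    have hyp : (y : ℚ) ^ p = (y ^ (p - 7) * y ^ 7 : ℚ) := by
      rw [← pow_add]
      congr 1
      omega
    have main : ((x : ℚ) + y) ^ p - (x : ℚ) ^ p - (y : ℚ) ^ p
        = ((p : ℚ) * x * y * ((x : ℚ) + y) * ((x : ℚ) ^ 2 + x * y + y ^ 2) ^ 2) * W := by
      calc ((x : ℚ) + y) ^ p - (x : ℚ) ^ p - (y : ℚ) ^ p
          = (y : ℚ) ^ p * ((q + 1) ^ p - q ^ p - 1) := by
            rw [hxy, hx, mul_pow, mul_pow]; ring
        _ = (y : ℚ) ^ p * ((p : ℚ) * (q * (q + 1) * (q ^ 2 + q + 1) ^ 2) * S) := by rw [key]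
        _ = ((p : ℚ) * x * y * ((x : ℚ) + y) * ((x : ℚ) ^ 2 + x * y + y ^ 2) ^ 2) * W := by
            rw [hWQ, hxy, hg2, hx, hyp]; ring
    exact_mod_cast main
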